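/- Let G be the real Lie group SL_n(ℝ) (n ≥ 2), K = SO(n) its maximal compact subgroup, with Cartan decomposition g = k ⊕ p at the Lie algebra level. If k₀ ∈ K and g ∈ G satisfy g⁻¹ k₀ g ∈ K, then there exists k' ∈ K with g⁻¹ k₀ g = k'⁻¹ k₀ k'. In other words, the intersection of the G-conjugacy class of k₀ with K equals the K-conjugacy class of k₀. -/

import Mathlib

open Matrix
open scoped MatrixOrder

lemma posSemidef_det_nonneg {n : ℕ} {A : Matrix (Fin n) (Fin n) ℝ}
    (hA : A.PosSemidef) : 0 ≤ A.det := by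
  rw [hA.1.det_eq_prod_eigenvalues]
  exact Finset.prod_nonneg fun i _ => by exact_mod_cast hA.eigenvalues_nonneg i

lemma sl_coe_inv {n : ℕ} (A : Matrix.SpecialLinearGroup (Fin n) ℝ) :
    ((A⁻¹ : Matrix.SpecialLinearGroup (Fin n) ℝ) : Matrix (Fin n) (Fin n) ℝ)
      = (A : Matrix (Fin n) (Fin n) ℝ)⁻¹ := by
  rw [Matrix.SpecialLinearGroup.coe_inv, Matrix.inv_def, A.2]
  simp

theorem stmt6 (n : ℕ) (hn : 2 ≤ n)
    (k₀ g : Matrix.SpecialLinearGroup (Fin n) ℝ)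
    (hk₀ : (k₀ : Matrix (Fin n) (Fin n) ℝ) ∈ Matrix.orthogonalGroup (Fin n) ℝ)
    (hg : ((g⁻¹ * k₀ * g : Matrix.SpecialLinearGroup (Fin n) ℝ) :
        Matrix (Fin n) (Fin n) ℝ) ∈ Matrix.orthogonalGroup (Fin n) ℝ) :
    ∃ k' : Matrix.SpecialLinearGroup (Fin n) ℝ,
      (k' : Matrix (Fin n) (Fin n) ℝ) ∈ Matrix.orthogonalGroup (Fin n) ℝ ∧
      g⁻¹ * k₀ * g = k'⁻¹ * k₀ * k' := by
  classical
  obtain ⟨gm, hgm⟩ : ∃ X : Matrix (Fin n) (Fin n) ℝ, X = ↑g := ⟨_, rfl⟩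
  obtain ⟨k0, hk0m⟩ : ∃ X : Matrix (Fin n) (Fin n) ℝ, X = ↑k₀ := ⟨_, rfl⟩
  have hA : (gmᴴ * gm).PosSemidef := posSemidef_conjTranspose_mul_self gm
  obtain ⟨p, hpdef⟩ : ∃ X : Matrix (Fin n) (Fin n) ℝ, X = CFC.sqrt (gmᴴ * gm) := ⟨_, rfl⟩
  have hp : p.PosSemidef := hpdef ▸ (CFC.sqrt_nonneg (gmᴴ * gm)).posSemidef
  have hpH : pᴴ = p := hp.1
  have hpsq : p * p = gmᴴ * gm := by rw [hpdef]; exact CFC.sqrt_mul_sqrt_self _ hA.nonneg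
  -- determinant of p is 1
  have hdetg : gm.det = 1 := by rw [hgm]; exact g.2
  have hdetp2 : p.det * p.det = 1 := by
    rw [← det_mul, hpsq, det_mul, det_conjTranspose, hdetg]
    simp
  have hdetp : p.det = 1 := by
    rcases mul_self_eq_one_iff.mp hdetp2 with h | h
    · exact h
    · exfalso
      have := posSemidef_det_nonneg hp
      rw [h] at this; linarith
  have hdetpu : IsUnit p.det := by rw [hdetp]; exact isUnit_one
  have hdetgu : IsUnit gm.det := by rw [hdetg]; exact isUnit_one
  have hp1 : p * p⁻¹ = 1 := mul_nonsing_inv p hdetpu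
  have hp2 : p⁻¹ * p = 1 := nonsing_inv_mul p hdetpu
  have hpinvH : (p⁻¹)ᴴ = p⁻¹ := by rw [conjTranspose_nonsing_inv, hpH]
  -- the orthogonal part of the polar decomposition
  obtain ⟨km, hkm⟩ : ∃ X : Matrix (Fin n) (Fin n) ℝ, X = gm * p⁻¹ := ⟨_, rfl⟩
  have hkmH : kmᴴ * km = 1 := by
    rw [hkm, conjTranspose_mul, hpinvH, Matrix.mul_assoc,
      ← Matrix.mul_assoc gmᴴ gm p⁻¹, ← hpsq]
    rw [Matrix.mul_assoc p p p⁻¹, hp1, Matrix.mul_one, hp2]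
  have hkminv : km⁻¹ = kmᴴ := inv_eq_left_inv hkmH
  have hkmH' : km * kmᴴ = 1 := by rw [mul_eq_one_comm] at hkmH; exact hkmH
  -- k₁
  obtain ⟨k₁, hk₁⟩ : ∃ X : Matrix (Fin n) (Fin n) ℝ, X = kmᴴ * k0 * km := ⟨_, rfl⟩
  have hk0H : k0ᴴ * k0 = 1 := by
    have := (mem_orthogonalGroup_iff' (n := Fin n) (R := ℝ)).mp hk₀
    rw [hk0m]
    simpa [star_eq_conjTranspose] using this
  have hk₁H : k₁ᴴ * k₁ = 1 := by
    have e : k₁ᴴ * k₁ = kmᴴ * (k0ᴴ * ((km * kmᴴ) * (k0 * km))) := by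
      rw [hk₁]
      simp only [conjTranspose_mul, conjTranspose_conjTranspose, Matrix.mul_assoc]
    rw [e, hkmH', Matrix.one_mul, ← Matrix.mul_assoc k0ᴴ, hk0H, Matrix.one_mul, hkmH]
  -- polar decomposition
  have hgdec : gm = km * p := by
    rw [hkm, Matrix.mul_assoc, hp2, Matrix.mul_one]
  have hginv : gm⁻¹ = p⁻¹ * kmᴴ := by
    rw [hgdec, Matrix.mul_inv_rev, hkminv]
  obtain ⟨m, hm⟩ : ∃ X : Matrix (Fin n) (Fin n) ℝ,
      X = ((g⁻¹ * k₀ * g : Matrix.SpecialLinearGroup (Fin n) ℝ) :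
        Matrix (Fin n) (Fin n) ℝ) := ⟨_, rfl⟩
  have hmval : m = gm⁻¹ * k0 * gm := by
    rw [hm, Matrix.SpecialLinearGroup.coe_mul, Matrix.SpecialLinearGroup.coe_mul,
      sl_coe_inv, ← hgm, ← hk0m]
  have hmeq : m = p⁻¹ * k₁ * p := by
    rw [hmval, hginv, hk₁]
    conv_lhs => rw [hgdec]
    simp only [Matrix.mul_assoc]
  have hmm : m * mᴴ = 1 := by
    have := (mem_orthogonalGroup_iff (n := Fin n) (R := ℝ)).mp hg
    rw [hm]
    simpa [star_eq_conjTranspose] using this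
  -- commutation : k₁ * (p*p) * k₁ᴴ = p * p
  have hcomm : k₁ * (p * p) * k₁ᴴ = p * p := by
    have h1 : p * (m * mᴴ) * p = p * p := by rw [hmm, Matrix.mul_one]
    rw [hmeq] at h1
    simp only [conjTranspose_mul, hpH, hpinvH, Matrix.mul_assoc] at h1
    rw [← Matrix.mul_assoc p p⁻¹, hp1, Matrix.one_mul] at h1
    calc k₁ * (p * p) * k₁ᴴ
        = k₁ * (p * (p * (k₁ᴴ * (p⁻¹ * p)))) := by
          rw [hp2, Matrix.mul_one]; simp only [Matrix.mul_assoc]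
      _ = p * p := h1
  -- q := k₁ p k₁ᴴ is a posSemidef square root of gmᴴ gm, hence equals p
  have hq : (k₁ * p * k₁ᴴ).PosSemidef := hp.mul_mul_conjTranspose_same k₁
  have hqsq : (k₁ * p * k₁ᴴ) ^ 2 = gmᴴ * gm := by
    rw [sq, ← hpsq, ← hcomm]
    calc k₁ * p * k₁ᴴ * (k₁ * p * k₁ᴴ)
        = k₁ * (p * ((k₁ᴴ * k₁) * (p * k₁ᴴ))) := by simp only [Matrix.mul_assoc]
      _ = k₁ * (p * p) * k₁ᴴ := by
          rw [hk₁H, Matrix.one_mul]; simp only [Matrix.mul_assoc]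
  have hqeq : k₁ * p * k₁ᴴ = p := by
    have := ((CFC.sqrt_eq_iff _ _ hA.nonneg hq.nonneg).mpr (by rw [← sq]; exact hqsq)).symm
    rw [← hpdef] at this
    exact this
  have haux : k₁ * p * k₁ᴴ * k₁ = k₁ * p := by
    rw [Matrix.mul_assoc (k₁ * p), hk₁H, Matrix.mul_one]
  have hcommp : k₁ * p = p * k₁ := by
    calc k₁ * p = k₁ * p * k₁ᴴ * k₁ := haux.symm
      _ = p * k₁ := by rw [hqeq]
  have hmk₁ : m = k₁ := by
    rw [hmeq, Matrix.mul_assoc, hcommp, ← Matrix.mul_assoc, hp2, Matrix.one_mul]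
  -- construct k' in SL
  have hdetkm : km.det = 1 := by
    rw [hkm, det_mul, hdetg, det_nonsing_inv, hdetp]
    simp
  obtain ⟨K', hK'⟩ : ∃ X : Matrix.SpecialLinearGroup (Fin n) ℝ, X = ⟨km, hdetkm⟩ := ⟨_, rfl⟩
  have hK'coe : (K' : Matrix (Fin n) (Fin n) ℝ) = km := by rw [hK']
  refine ⟨K', ?_, ?_⟩
  · rw [hK'coe, mem_orthogonalGroup_iff']
    simpa [star_eq_conjTranspose] using hkmH
  · have hfin : ((g⁻¹ * k₀ * g : Matrix.SpecialLinearGroup (Fin n) ℝ) :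
        Matrix (Fin n) (Fin n) ℝ) = ((K'⁻¹ * k₀ * K' : Matrix.SpecialLinearGroup (Fin n) ℝ) :
        Matrix (Fin n) (Fin n) ℝ) := by
      rw [← hm, Matrix.SpecialLinearGroup.coe_mul, Matrix.SpecialLinearGroup.coe_mul,
        sl_coe_inv, hK'coe, hmk₁, hk₁, hkminv, ← hk0m]
    exact Subtype.coe_injective hfin
  done
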